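/- For all complex numbers z and w and every real p ≥ 1 with p ≠ 2, min{|z|^p, |w|^p} ≤ |4 - 2·√2^p|^{-1} · |2(|z|^p + |w|^p) - (|z - w|^p + |z + w|^p)|. -/

import Mathlib

open Real Set

-- concave case: for 0 < α < 1 and 0 ≤ A ≤ B : (A+B)^α + A^α ≤ (2A)^α + B^α
lemma aux_concave {α A B : ℝ} (hα0 : 0 < α) (hα1 : α < 1) (hA : 0 ≤ A) (hAB : A ≤ B) :
    (A + B) ^ α + A ^ α ≤ (2 * A) ^ α + B ^ α := by
  have hB : 0 ≤ B := hA.trans hAB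
  rcases eq_or_lt_of_le hB with hB0 | hB0
  · have hA0 : A = 0 := le_antisymm (hAB.trans hB0.ge) hA
    simp [← hB0, hA0, Real.zero_rpow hα0.ne']
  · have hconc := (Real.strictConcaveOn_rpow hα0 hα1).concaveOn
    set c : ℝ := A / B with hc
    have hc0 : 0 ≤ c := div_nonneg hA hB
    have hc1 : c ≤ 1 := div_le_one_of_le₀ hAB hB
    have hx : A ∈ Ici (0:ℝ) := Set.mem_Ici.2 hA
    have hy : A + B ∈ Ici (0:ℝ) := Set.mem_Ici.2 (by positivity)
    have h1 := hconc.2 hx hy (by linarith : (0:ℝ) ≤ 1 - c) hc0 (by ring)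
    have h2 := hconc.2 hx hy hc0 (by linarith : (0:ℝ) ≤ 1 - c) (by ring)
    have e1 : (1 - c) • A + c • (A + B) = 2 * A := by
      simp only [smul_eq_mul, hc]; field_simp; ring
    have e2 : c • A + (1 - c) • (A + B) = B := by
      simp only [smul_eq_mul, hc]; field_simp; ring
    rw [e1] at h1; rw [e2] at h2
    simp only [smul_eq_mul] at h1 h2
    nlinarith [h1, h2]

-- convex case: for α ≥ 1 and 0 ≤ A ≤ B : (2A)^α + B^α ≤ (A+B)^α + A^α
lemma aux_convex {α A B : ℝ} (hα1 : 1 ≤ α) (hA : 0 ≤ A) (hAB : A ≤ B) :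
    (2 * A) ^ α + B ^ α ≤ (A + B) ^ α + A ^ α := by
  have hB : 0 ≤ B := hA.trans hAB
  rcases eq_or_lt_of_le hB with hB0 | hB0
  · have hA0 : A = 0 := le_antisymm (hAB.trans hB0.ge) hA
    simp [← hB0, hA0]
  · have hconv := convexOn_rpow hα1
    set c : ℝ := A / B with hc
    have hc0 : 0 ≤ c := div_nonneg hA hB
    have hc1 : c ≤ 1 := div_le_one_of_le₀ hAB hB
    have hx : A ∈ Ici (0:ℝ) := Set.mem_Ici.2 hA
    have hy : A + B ∈ Ici (0:ℝ) := Set.mem_Ici.2 (by positivity)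
    have h1 := hconv.2 hx hy (by linarith : (0:ℝ) ≤ 1 - c) hc0 (by ring)
    have h2 := hconv.2 hx hy hc0 (by linarith : (0:ℝ) ≤ 1 - c) (by ring)
    have e1 : (1 - c) • A + c • (A + B) = 2 * A := by
      simp only [smul_eq_mul, hc]; field_simp; ring
    have e2 : c • A + (1 - c) • (A + B) = B := by
      simp only [smul_eq_mul, hc]; field_simp; ring
    rw [e1] at h1; rw [e2] at h2
    simp only [smul_eq_mul] at h1 h2
    nlinarith [h1, h2]

lemma key_real (p : ℝ) (hp : 1 ≤ p) (hp2 : p ≠ 2) (a b u v : ℝ)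
    (ha : 0 ≤ a) (hab : a ≤ b) (hu : 0 ≤ u) (hv : 0 ≤ v)
    (hpar : u ^ 2 + v ^ 2 = 2 * (a ^ 2 + b ^ 2)) :
    min (a ^ p) (b ^ p) ≤
      |4 - 2 * Real.sqrt 2 ^ p|⁻¹ * |2 * (a ^ p + b ^ p) - (u ^ p + v ^ p)| := by
  have hb : 0 ≤ b := ha.trans hab
  set α : ℝ := p / 2 with hα
  have hα0 : 0 < α := by positivity
  have hp0 : 0 < p := by linarith
  -- rewrite sqrt 2 ^ p as 2 ^ α
  have hsqrt : Real.sqrt 2 ^ p = (2:ℝ) ^ α := by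
    rw [Real.sqrt_eq_rpow, ← Real.rpow_mul (by norm_num : (0:ℝ) ≤ 2), hα]
    ring_nf
  -- a^p = (a^2)^α etc.
  have sq_rpow : ∀ x : ℝ, 0 ≤ x → (x ^ 2) ^ α = x ^ p := by
    intro x hx
    rw [← Real.rpow_natCast x 2, ← Real.rpow_mul hx]
    push_cast
    congr 1
    rw [hα]; ring
  have hmin : min (a ^ p) (b ^ p) = a ^ p :=
    min_eq_left (Real.rpow_le_rpow ha hab hp0.le)
  rw [hmin, hsqrt]
  have hA2 : a ^ 2 ≤ b ^ 2 := by nlinarith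
  have hA0 : (0:ℝ) ≤ a ^ 2 := sq_nonneg a
  have hU : (0:ℝ) ≤ u ^ 2 := sq_nonneg u
  have hV : (0:ℝ) ≤ v ^ 2 := sq_nonneg v
  have h2A : ((2 * a ^ 2) ^ α : ℝ) = 2 ^ α * a ^ p := by
    rw [Real.mul_rpow (by norm_num) hA0, sq_rpow a ha]
  rcases lt_or_gt_of_ne hp2 with hlt | hgt
  · -- p < 2, α < 1
    have hα1 : α < 1 := by rw [hα]; linarith
    have h2α : (2:ℝ) ^ α < 2 := by
      calc (2:ℝ) ^ α < 2 ^ (1:ℝ) :=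
            Real.rpow_lt_rpow_left_iff (by norm_num) |>.2 hα1
        _ = 2 := Real.rpow_one 2
    have hc : 0 < 4 - 2 * (2:ℝ) ^ α := by linarith
    rw [abs_of_pos hc]
    -- concavity midpoint: u^p + v^p ≤ 2 * (a^2+b^2)^α
    have hconc := (Real.strictConcaveOn_rpow hα0 hα1).concaveOn
    have hmid := hconc.2 (hU : u^2 ∈ Ici (0:ℝ)) (hV : v^2 ∈ Ici (0:ℝ))
      (by norm_num : (0:ℝ) ≤ 1/2) (by norm_num : (0:ℝ) ≤ 1/2) (by norm_num)
    simp only [smul_eq_mul] at hmid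
    have emid : (1/2 : ℝ) * u^2 + (1/2 : ℝ) * v^2 = a^2 + b^2 := by linarith
    rw [emid] at hmid
    have h3 : u ^ p + v ^ p ≤ 2 * (a^2 + b^2) ^ α := by
      rw [← sq_rpow u hu, ← sq_rpow v hv]; linarith
    have h4 := aux_concave hα0 hα1 hA0 hA2
    rw [h2A, sq_rpow a ha, sq_rpow b hb] at h4
    have hX : (4 - 2 * (2:ℝ) ^ α) * a ^ p ≤
        2 * (a ^ p + b ^ p) - (u ^ p + v ^ p) := by nlinarith
    rw [inv_mul_eq_div, le_div_iff₀ hc]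
    calc a ^ p * (4 - 2 * (2:ℝ)^α) = (4 - 2 * (2:ℝ)^α) * a ^ p := by ring
      _ ≤ 2 * (a ^ p + b ^ p) - (u ^ p + v ^ p) := hX
      _ ≤ |2 * (a ^ p + b ^ p) - (u ^ p + v ^ p)| := le_abs_self _
  · -- p > 2, α > 1
    have hα1 : 1 < α := by rw [hα]; linarith
    have h2α : (2:ℝ) < 2 ^ α := by
      calc (2:ℝ) = 2 ^ (1:ℝ) := (Real.rpow_one 2).symm
        _ < 2 ^ α := Real.rpow_lt_rpow_left_iff (by norm_num) |>.2 hα1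
    have hc : 4 - 2 * (2:ℝ) ^ α < 0 := by linarith
    rw [abs_of_neg hc]
    have hc' : 0 < 2 * (2:ℝ) ^ α - 4 := by linarith
    have hconv := convexOn_rpow hα1.le
    have hmid := hconv.2 (hU : u^2 ∈ Ici (0:ℝ)) (hV : v^2 ∈ Ici (0:ℝ))
      (by norm_num : (0:ℝ) ≤ 1/2) (by norm_num : (0:ℝ) ≤ 1/2) (by norm_num)
    simp only [smul_eq_mul] at hmid
    have emid : (1/2 : ℝ) * u^2 + (1/2 : ℝ) * v^2 = a^2 + b^2 := by linarith
    rw [emid] at hmid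
    have h3 : 2 * (a^2 + b^2) ^ α ≤ u ^ p + v ^ p := by
      rw [← sq_rpow u hu, ← sq_rpow v hv]; linarith
    have h4 := aux_convex hα1.le hA0 hA2
    rw [h2A, sq_rpow a ha, sq_rpow b hb] at h4
    have hX : (2 * (2:ℝ) ^ α - 4) * a ^ p ≤
        (u ^ p + v ^ p) - 2 * (a ^ p + b ^ p) := by nlinarith
    rw [neg_sub, inv_mul_eq_div, le_div_iff₀ hc']
    calc a ^ p * (2 * (2:ℝ)^α - 4) = (2 * (2:ℝ)^α - 4) * a ^ p := by ring
      _ ≤ (u ^ p + v ^ p) - 2 * (a ^ p + b ^ p) := hX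
      _ ≤ |2 * (a ^ p + b ^ p) - (u ^ p + v ^ p)| := by
          rw [abs_sub_comm]; exact le_abs_self _

theorem stmt2 (p : ℝ) (hp : 1 ≤ p) (hp2 : p ≠ 2) (z w : ℂ) :
    min (‖z‖ ^ p) (‖w‖ ^ p) ≤
      |4 - 2 * Real.sqrt 2 ^ p|⁻¹ *
        |2 * (‖z‖ ^ p + ‖w‖ ^ p) -
          (‖z - w‖ ^ p + ‖z + w‖ ^ p)| := by
  have hpar : ‖z - w‖ ^ 2 + ‖z + w‖ ^ 2 =
      2 * (‖z‖ ^ 2 + ‖w‖ ^ 2) := by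
    have := parallelogram_law_with_norm ℂ z w
    nlinarith [this]
  rcases le_total (‖z‖) (‖w‖) with h | h
  · exact key_real p hp hp2 _ _ _ _ (norm_nonneg z) h
      (norm_nonneg _) (norm_nonneg _) hpar
  · have := key_real p hp hp2 (‖w‖) (‖z‖)
      (‖w - z‖) (‖w + z‖)
      (norm_nonneg w) h (norm_nonneg _) (norm_nonneg _)
      (by rw [norm_sub_rev w z, add_comm w z]; linarith [hpar])
    rw [norm_sub_rev w z, add_comm w z] at this
    rw [min_comm]
    calc min (‖w‖ ^ p) (‖z‖ ^ p) ≤ _ := this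
    _ = _ := by ring_nf
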